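/- Let $m_1$ be a positive integer and let $C$ be a real $m_1 \times m_1$ matrix with entries $c_{ik} \in [0,1]$. Let $J_1, J_2 \subseteq \{1,\dots,m_1\}$ be disjoint sets with $|J_1| = |J_2| = l \ge 1$, $m_1 > l + 1$, let $0 < \epsilon \le 1/2$, and suppose $\log(m_1 - l) \le 9 l^2 / 16$. Assume: (i) for every $i \in J_1$ and $k \in J_1$, $c_{ik} \ge 1 - \epsilon/2$, and for every $j \in J_2$ and $k \in J_2$, $c_{jk} \ge 1 - \epsilon/2$; (ii) for every $i \in J_1$ and $k \in J_2$, $c_{ik} = 0$, and for every $j \in J_2$ and $k \in J_1$, $c_{jk} = 0$; (iii) for any two indices $i, j$ lying in the same set ($J_1$ or $J_2$), $\sum_{k \notin J_1 \cup J_2} |c_{ik} - c_{jk}| \le \sqrt{\log(m_1 - l)}$. Set $\varepsilon = \sqrt{\,l\epsilon/2 + \sqrt{\log(m_1 - l)}\,}$. Then for any $i, j$ in the same set ($J_1$ or $J_2$), $d(c_{i.}, c_{j.}) \le \varepsilon$, and for any $i \in J_1$ and $j \in J_2$, $d(c_{i.}, c_{j.}) \ge \varepsilon$. -/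
import Mathlib

lemma msc_aux (m : ℕ) (C : Fin m → Fin m → ℝ)
    (hC : ∀ i k, C i k ∈ Set.Icc (0 : ℝ) 1)
    (A B : Finset (Fin m)) (hdisj : Disjoint A B) (l : ℕ) (hA : A.card = l)
    (ε L : ℝ) (hε0 : 0 < ε) (hε : ε ≤ 1 / 2) (hL : 0 ≤ L)
    (i j : Fin m)
    (hin : ∀ k ∈ A, 1 - ε / 2 ≤ C i k ∧ 1 - ε / 2 ≤ C j k)
    (hcr : ∀ k ∈ B, C i k = 0 ∧ C j k = 0)
    (hout : ∑ k ∈ (A ∪ B)ᶜ, |C i k - C j k| ≤ Real.sqrt L) :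
    ∑ k, (C i k - C j k) ^ 2 ≤ (l : ℝ) * ε / 2 + Real.sqrt L := by
  have hsplit := Finset.sum_add_sum_compl (A ∪ B) (fun k => (C i k - C j k) ^ 2)
  rw [← hsplit, Finset.sum_union hdisj]
  have h1 : ∑ k ∈ A, (C i k - C j k) ^ 2 ≤ (l : ℝ) * (ε / 2) := by
    calc ∑ k ∈ A, (C i k - C j k) ^ 2 ≤ ∑ k ∈ A, ε / 2 := by
          apply Finset.sum_le_sum
          intro k hk
          obtain ⟨h1, h2⟩ := hin k hk
          have hu1 := (hC i k).2
          have hu2 := (hC j k).2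
          have habs : (C i k - C j k) ^ 2 ≤ (ε / 2) ^ 2 := by
            apply sq_le_sq' <;> linarith
          nlinarith
      _ = (l : ℝ) * (ε / 2) := by rw [Finset.sum_const, hA]; simp [mul_comm]
  have h2 : ∑ k ∈ B, (C i k - C j k) ^ 2 = 0 := by
    apply Finset.sum_eq_zero
    intro k hk
    obtain ⟨e1, e2⟩ := hcr k hk
    rw [e1, e2]; ring
  have h3 : ∑ k ∈ (A ∪ B)ᶜ, (C i k - C j k) ^ 2 ≤ Real.sqrt L := by
    refine le_trans (Finset.sum_le_sum fun k _ => ?_) hout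
    have hu1 := (hC i k).1
    have hu2 := (hC i k).2
    have hv1 := (hC j k).1
    have hv2 := (hC j k).2
    have habs : |C i k - C j k| ≤ 1 := by rw [abs_le]; constructor <;> linarith
    calc (C i k - C j k) ^ 2 = |C i k - C j k| ^ 2 := (sq_abs _).symm
      _ ≤ |C i k - C j k| * 1 := by rw [sq]; exact mul_le_mul_of_nonneg_left habs (abs_nonneg _)
      _ = |C i k - C j k| := mul_one _
  have : (l : ℝ) * (ε / 2) = (l : ℝ) * ε / 2 := by ring
  linarith

/-- Full Theorem 2 of the paper (MSC-DBSCAN) in deterministic form: with the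
ε-similarity condition within each of the two disjoint clusters `J₁` and `J₂`
of equal size `l`, vanishing cross-cluster similarities, and controlled
contributions of the non-clustered slices, the Euclidean distance between two
rows in the same cluster is at most the DBSCAN radius
`ε' = √(l*ε/2 + √(log (m₁ - l)))`, while the distance between rows from
different clusters is at least `ε'`. -/
theorem msc_dbscan_full
    (m₁ : ℕ) (hm₁ : 0 < m₁) (C : Fin m₁ → Fin m₁ → ℝ)
    (hC : ∀ i k, C i k ∈ Set.Icc (0 : ℝ) 1)
    (J₁ J₂ : Finset (Fin m₁)) (hdisj : Disjoint J₁ J₂) (l : ℕ)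
    (hcard₁ : J₁.card = l) (hcard₂ : J₂.card = l) (hl : 1 ≤ l)
    (hml : l + 1 < m₁)
    (ε : ℝ) (hε0 : 0 < ε) (hε : ε ≤ 1 / 2)
    (hlog : Real.log ((m₁ : ℝ) - (l : ℝ)) ≤ 9 * (l : ℝ) ^ 2 / 16)
    (hin₁ : ∀ i ∈ J₁, ∀ k ∈ J₁, 1 - ε / 2 ≤ C i k)
    (hin₂ : ∀ j ∈ J₂, ∀ k ∈ J₂, 1 - ε / 2 ≤ C j k)
    (hcross₁ : ∀ i ∈ J₁, ∀ k ∈ J₂, C i k = 0)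
    (hcross₂ : ∀ j ∈ J₂, ∀ k ∈ J₁, C j k = 0)
    (hout : ∀ i j : Fin m₁, ((i ∈ J₁ ∧ j ∈ J₁) ∨ (i ∈ J₂ ∧ j ∈ J₂)) →
      ∑ k ∈ (J₁ ∪ J₂)ᶜ, |C i k - C j k| ≤ Real.sqrt (Real.log ((m₁ : ℝ) - (l : ℝ)))) :
    (∀ i j : Fin m₁, ((i ∈ J₁ ∧ j ∈ J₁) ∨ (i ∈ J₂ ∧ j ∈ J₂)) →
        Real.sqrt (∑ k, (C i k - C j k) ^ 2) ≤
          Real.sqrt ((l : ℝ) * ε / 2 + Real.sqrt (Real.log ((m₁ : ℝ) - (l : ℝ))))) ∧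
    (∀ i ∈ J₁, ∀ j ∈ J₂,
        Real.sqrt ((l : ℝ) * ε / 2 + Real.sqrt (Real.log ((m₁ : ℝ) - (l : ℝ)))) ≤
          Real.sqrt (∑ k, (C i k - C j k) ^ 2)) := by
  set L := Real.log ((m₁ : ℝ) - (l : ℝ)) with hLdef
  have hml' : (1 : ℝ) ≤ (m₁ : ℝ) - (l : ℝ) := by
    have : (l : ℝ) + 1 < (m₁ : ℝ) := by exact_mod_cast hml
    linarith
  have hL0 : 0 ≤ L := Real.log_nonneg hml'
  have hsqL : Real.sqrt L ≤ 3 * (l : ℝ) / 4 := by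
    have h1 : Real.sqrt L ≤ Real.sqrt (9 * (l : ℝ) ^ 2 / 16) := Real.sqrt_le_sqrt hlog
    have h2 : (9 * (l : ℝ) ^ 2 / 16) = (3 * (l : ℝ) / 4) ^ 2 := by ring
    have hl0 : (0 : ℝ) ≤ 3 * (l : ℝ) / 4 := by positivity
    rw [h2, Real.sqrt_sq hl0] at h1
    exact h1
  constructor
  · intro i j hij
    apply Real.sqrt_le_sqrt
    rcases hij with ⟨hi, hj⟩ | ⟨hi, hj⟩
    · exact msc_aux m₁ C hC J₁ J₂ hdisj l hcard₁ ε L hε0 hε hL0 i j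
        (fun k hk => ⟨hin₁ i hi k hk, hin₁ j hj k hk⟩)
        (fun k hk => ⟨hcross₁ i hi k hk, hcross₁ j hj k hk⟩)
        (hout i j (Or.inl ⟨hi, hj⟩))
    · refine msc_aux m₁ C hC J₂ J₁ hdisj.symm l hcard₂ ε L hε0 hε hL0 i j
        (fun k hk => ⟨hin₂ i hi k hk, hin₂ j hj k hk⟩)
        (fun k hk => ⟨hcross₂ i hi k hk, hcross₂ j hj k hk⟩) ?_
      rw [Finset.union_comm]
      exact hout i j (Or.inr ⟨hi, hj⟩)
  · intro i hi j hj
    apply Real.sqrt_le_sqrt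
    have hsub : ∑ k ∈ J₁ ∪ J₂, (C i k - C j k) ^ 2 ≤ ∑ k, (C i k - C j k) ^ 2 :=
      Finset.sum_le_sum_of_subset_of_nonneg (Finset.subset_univ _)
        (fun k _ _ => sq_nonneg _)
    rw [Finset.sum_union hdisj] at hsub
    have hA : ∑ k ∈ J₁, (C i k - C j k) ^ 2 ≥ (l : ℝ) * (9 / 16) := by
      calc (l : ℝ) * (9 / 16) = ∑ _k ∈ J₁, (9 / 16 : ℝ) := by
            rw [Finset.sum_const, hcard₁]; simp [mul_comm]
        _ ≤ ∑ k ∈ J₁, (C i k - C j k) ^ 2 := by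
            apply Finset.sum_le_sum
            intro k hk
            have h1 := hin₁ i hi k hk
            have h2 := hcross₂ j hj k hk
            have : (3 / 4 : ℝ) ≤ C i k - C j k := by rw [h2]; linarith
            nlinarith
    have hB : ∑ k ∈ J₂, (C i k - C j k) ^ 2 ≥ (l : ℝ) * (9 / 16) := by
      calc (l : ℝ) * (9 / 16) = ∑ _k ∈ J₂, (9 / 16 : ℝ) := by
            rw [Finset.sum_const, hcard₂]; simp [mul_comm]
        _ ≤ ∑ k ∈ J₂, (C i k - C j k) ^ 2 := by
            apply Finset.sum_le_sum
            intro k hk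
            have h1 := hin₂ j hj k hk
            have h2 := hcross₁ i hi k hk
            have : C i k - C j k ≤ -(3 / 4 : ℝ) := by rw [h2]; linarith
            nlinarith
    have hl1 : (1 : ℝ) ≤ (l : ℝ) := by exact_mod_cast hl
    nlinarith
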